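/- arXiv:2403.00481 — 2 statements merged into one kernel-verified Lean document; each statement's English description precedes it below -/
import Mathlib

section
/- Let (V,N,E) be a uniform labeled multigraph and A a unital C*-algebra. Let q = (q^{ks}_{ir}) be a quantum permutation matrix over A indexed by V × {1,…,N} satisfying relations (R2), (R3) and the flipped relations (R2'), (R3'). For edges (k,l,s),(i,j,r) ∈ E set u^{(k,l)s}_{(i,j)r} := q^{ks}_{ir} q^{ls}_{jr}. Then the contragredient matrix (with entries (u^{σ}_{τ})*) is also unitary; explicitly, for all edges (k,l,s), (k',l',s') ∈ E: ∑_{(i,j,r)∈E} (u^{(k,l)s}_{(i,j)r})* u^{(k',l')s'}_{(i,j)r} = δ_{k,k'} δ_{l,l'} δ_{s,s'} · 1 and ∑_{(i,j,r)∈E} u^{(i,j)r}_{(k,l)s} (u^{(i,j)r}_{(k',l')s'})* = δ_{k,k'} δ_{l,l'} δ_{s,s'} · 1. -/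
open scoped BigOperators

/-- A quantum permutation matrix over a unital ring with star, indexed by a finite set `X`. -/
def IsQuantumPermutation {X A : Type*} [Fintype X] [Ring A] [StarRing A]
    (p : X → X → A) : Prop :=
  (∀ x y, star (p x y) = p x y) ∧ (∀ x y, p x y * p x y = p x y) ∧
  (∀ x, ∑ y, p x y = 1) ∧ (∀ y, ∑ x, p x y = 1)

/-- `edeg E i j` is the number of labels `r` such that `(i,j,r)` is an edge, i.e. `|E^i_j|`. -/
def edeg {V : Type*} [DecidableEq V] {N : ℕ} (E : Finset (V × V × Fin N)) (i j : V) : ℕ :=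
  (E.filter fun e => e.1 = i ∧ e.2.1 = j).card

open Finset in
lemma orth_of_sum_one {A : Type*} [CStarAlgebra A] {ι : Type*} [Fintype ι] [DecidableEq ι]
    (p : ι → A) (hstar : ∀ i, star (p i) = p i) (hidem : ∀ i, p i * p i = p i)
    (hsum : ∑ i, p i = 1) : ∀ a b, a ≠ b → p a * p b = 0 := by
  intro a b hab
  let _ : PartialOrder A := CStarAlgebra.spectralOrder A
  have _ : StarOrderedRing A := CStarAlgebra.spectralOrderedRing A
  have h1 : ∑ i, p a * p i * p a = p a := by
    rw [← Finset.sum_mul, ← Finset.mul_sum, hsum, mul_one, hidem]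
  have h2 : ∑ i ∈ univ.erase a, p a * p i * p a = 0 := by
    have h := Finset.add_sum_erase Finset.univ (fun i => p a * p i * p a) (Finset.mem_univ a)
    rw [h1, hidem a, hidem a] at h
    exact add_eq_left.mp h
  have h3 : ∀ i ∈ univ.erase a, p a * p i * p a = 0 := by
    refine (Finset.sum_eq_zero_iff_of_nonneg ?_).mp h2
    intro i _
    have key : star (p i * p a) * (p i * p a) = p a * p i * p a := by
      rw [star_mul, hstar, hstar, mul_assoc, ← mul_assoc (p i), hidem, ← mul_assoc]
    rw [← key]
    exact star_mul_self_nonneg _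
  have h4 : p a * p b * p a = 0 := h3 b (mem_erase.2 ⟨hab.symm, mem_univ b⟩)
  have h5 : p b * p a = 0 := by
    have : star (p b * p a) * (p b * p a) = 0 := by
      rw [star_mul, hstar, hstar, mul_assoc, ← mul_assoc (p b), hidem, ← mul_assoc, h4]
    exact (CStarRing.star_mul_self_eq_zero_iff _).mp this
  calc p a * p b = star (p b * p a) := by rw [star_mul, hstar, hstar]
  _ = 0 := by rw [h5, star_zero]

lemma mem_of_edeg_eq_N {V : Type*} [DecidableEq V] {N : ℕ} {E : Finset (V × V × Fin N)}
    {i j : V} (h : edeg E i j = N) (r : Fin N) : (i, j, r) ∈ E := by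
  classical
  set F := E.filter (fun e => e.1 = i ∧ e.2.1 = j) with hF
  have hsub : F ⊆ Finset.univ.image (fun t : Fin N => ((i, j, t) : V × V × Fin N)) := by
    intro e he
    rw [hF, Finset.mem_filter] at he
    obtain ⟨-, h1, h2⟩ := he
    refine Finset.mem_image.2 ⟨e.2.2, Finset.mem_univ _, ?_⟩
    obtain ⟨a, b, c⟩ := e
    simp_all
  have hinj : Function.Injective (fun t : Fin N => ((i, j, t) : V × V × Fin N)) := by
    intro t t' htt
    simpa using htt
  have hcard : (Finset.univ.image (fun t : Fin N => ((i, j, t) : V × V × Fin N))).card = N := by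
    rw [Finset.card_image_of_injective _ hinj, Finset.card_univ, Fintype.card_fin]
  have hEq : F = Finset.univ.image (fun t : Fin N => ((i, j, t) : V × V × Fin N)) :=
    Finset.eq_of_subset_of_card_le hsub (by rw [hcard]; exact le_of_eq h.symm)
  have : (i, j, r) ∈ F := by
    rw [hEq]
    exact Finset.mem_image.2 ⟨r, Finset.mem_univ _, rfl⟩
  rw [hF, Finset.mem_filter] at this
  exact this.1

lemma edeg_ne_zero_of_mem {V : Type*} [DecidableEq V] {N : ℕ} {E : Finset (V × V × Fin N)}
    {i j : V} {r : Fin N} (h : (i, j, r) ∈ E) : edeg E i j ≠ 0 :=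
  Finset.card_ne_zero_of_mem (Finset.mem_filter.2 ⟨h, rfl, rfl⟩)

/-- Unitarity of the contragredient of the edge corepresentation matrix
`u^{(k,l)s}_{(i,j)r} = q^{ks}_{ir} q^{ls}_{jr}` for a uniform multigraph:
`∑_{τ∈E} (u^σ_τ)* u^{σ'}_τ = δ_{σ,σ'} 1` and `∑_{τ∈E} u^τ_σ (u^τ_{σ'})* = δ_{σ,σ'} 1`. -/
theorem stmt4 {A : Type*} [CStarAlgebra A]
    {V : Type*} [Fintype V] [DecidableEq V] {N : ℕ} (hN : 1 ≤ N)
    (E : Finset (V × V × Fin N))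
    (hE : ∀ (i j : V) (r r' : Fin N), (i, j, r) ∈ E → r' ≤ r → (i, j, r') ∈ E)
    (hUnif : ∀ i j : V, edeg E i j = 0 ∨ edeg E i j = N)
    (q : V × Fin N → V × Fin N → A)
    (hq : IsQuantumPermutation q)
    (hR2 : ∀ (i j k l : V) (r s s' : Fin N), (i, j, r) ∈ E → edeg E k l = 0 →
      q (k, s) (i, r) * q (l, s') (j, r) = 0)
    (hR3 : ∀ (i j k l : V) (r s s' : Fin N), (i, j, r) ∈ E → edeg E k l ≠ 0 → s ≠ s' →
      q (k, s) (i, r) * q (l, s') (j, r) = 0)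
    (hR2' : ∀ (i j k l : V) (r s s' : Fin N), (i, j, r) ∈ E → edeg E k l = 0 →
      q (i, r) (k, s) * q (j, r) (l, s') = 0)
    (hR3' : ∀ (i j k l : V) (r s s' : Fin N), (i, j, r) ∈ E → edeg E k l ≠ 0 → s ≠ s' →
      q (i, r) (k, s) * q (j, r) (l, s') = 0)
    (k l : V) (s : Fin N) (hkls : (k, l, s) ∈ E)
    (k' l' : V) (s' : Fin N) (hk'l's' : (k', l', s') ∈ E) :
    ((∑ τ ∈ E, star (q (k, s) (τ.1, τ.2.2) * q (l, s) (τ.2.1, τ.2.2)) *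
        (q (k', s') (τ.1, τ.2.2) * q (l', s') (τ.2.1, τ.2.2))) =
      if k = k' ∧ l = l' ∧ s = s' then 1 else 0) ∧
    ((∑ τ ∈ E, (q (τ.1, τ.2.2) (k, s) * q (τ.2.1, τ.2.2) (l, s)) *
        star (q (τ.1, τ.2.2) (k', s') * q (τ.2.1, τ.2.2) (l', s'))) =
      if k = k' ∧ l = l' ∧ s = s' then 1 else 0) := by
  obtain ⟨hqs, hqi, hrow, hcol⟩ := hq
  have colOrth : ∀ (y x x' : V × Fin N), x ≠ x' → q x y * q x' y = 0 := fun y =>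
    orth_of_sum_one (fun x => q x y) (fun x => hqs x y) (fun x => hqi x y) (hcol y)
  have rowOrth : ∀ (x y y' : V × Fin N), y ≠ y' → q x y * q x y' = 0 := fun x =>
    orth_of_sum_one (fun y => q x y) (fun y => hqs x y) (fun y => hqi x y) (hrow x)
  have memN : ∀ i j : V, edeg E i j ≠ 0 → ∀ r : Fin N, (i, j, r) ∈ E := fun i j h r =>
    mem_of_edeg_eq_N ((hUnif i j).resolve_left h) r
  have split : ∀ f : V × V × Fin N → A,
      ∑ τ : V × V × Fin N, f τ = ∑ i : V, ∑ j : V, ∑ r : Fin N, f (i, j, r) := by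
    intro f
    rw [Fintype.sum_prod_type]
    exact Finset.sum_congr rfl fun i _ => Fintype.sum_prod_type _
  have split2 : ∀ g : V × Fin N → A,
      ∑ y : V × Fin N, g y = ∑ a : V, ∑ b : Fin N, g (a, b) := fun g =>
    Fintype.sum_prod_type _
  constructor
  · -- first identity
    by_cases hks : k = k' ∧ s = s'
    · obtain ⟨hk, hs⟩ := hks
      subst hk; subst hs
      have key1 : ∀ (i j : V) (r r' : Fin N), ¬(r' = r ∧ (i, j, r) ∈ E) →
          q (k, s) (i, r') * q (l', s) (j, r) = 0 := by
        intro i j r r' hcon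
        rcases hUnif i j with h0 | hN'
        · exact hR2' k l' i j s r' r hk'l's' h0
        · have hne0 : edeg E i j ≠ 0 := by rw [hN']; omega
          exact hR3' k l' i j s r' r hk'l's' hne0 (fun h => hcon ⟨h, memN i j hne0 r⟩)
      have hterm : ∀ τ : V × V × Fin N,
          star (q (k, s) (τ.1, τ.2.2) * q (l, s) (τ.2.1, τ.2.2)) *
            (q (k, s) (τ.1, τ.2.2) * q (l', s) (τ.2.1, τ.2.2)) =
          q (l, s) (τ.2.1, τ.2.2) * (q (k, s) (τ.1, τ.2.2) * q (l', s) (τ.2.1, τ.2.2)) := by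
        intro τ
        rw [star_mul, hqs, hqs, mul_assoc, ← mul_assoc (q (k, s) (τ.1, τ.2.2)), hqi]
      rw [Finset.sum_congr rfl (fun τ _ => hterm τ)]
      rw [Finset.sum_subset (Finset.subset_univ E) (fun τ _ hτ => by
        rw [key1 τ.1 τ.2.1 τ.2.2 τ.2.2 (fun hc => hτ hc.2), mul_zero])]
      have expand : ∀ (i j : V) (r : Fin N),
          q (l, s) (j, r) * (q (k, s) (i, r) * q (l', s) (j, r)) =
          ∑ r' : Fin N, q (l, s) (j, r) * (q (k, s) (i, r') * q (l', s) (j, r)) := by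
        intro i j r
        symm
        apply Finset.sum_eq_single_of_mem r (Finset.mem_univ _)
        intro r' _ hne
        rw [key1 i j r r' (fun hc => hne hc.1), mul_zero]
      have main : ∑ τ : V × V × Fin N,
          q (l, s) (τ.2.1, τ.2.2) * (q (k, s) (τ.1, τ.2.2) * q (l', s) (τ.2.1, τ.2.2)) =
          ∑ z : V × Fin N, q (l, s) z * q (l', s) z :=
        calc ∑ τ : V × V × Fin N,
            q (l, s) (τ.2.1, τ.2.2) * (q (k, s) (τ.1, τ.2.2) * q (l', s) (τ.2.1, τ.2.2))
            = ∑ i : V, ∑ j : V, ∑ r : Fin N,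
                q (l, s) (j, r) * (q (k, s) (i, r) * q (l', s) (j, r)) :=
              split (fun τ => q (l, s) (τ.2.1, τ.2.2) *
                (q (k, s) (τ.1, τ.2.2) * q (l', s) (τ.2.1, τ.2.2)))
          _ = ∑ j : V, ∑ i : V, ∑ r : Fin N,
                q (l, s) (j, r) * (q (k, s) (i, r) * q (l', s) (j, r)) := Finset.sum_comm
          _ = ∑ j : V, ∑ r : Fin N, ∑ i : V,
                q (l, s) (j, r) * (q (k, s) (i, r) * q (l', s) (j, r)) :=
              Finset.sum_congr rfl fun j _ => Finset.sum_comm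
          _ = ∑ j : V, ∑ r : Fin N, ∑ i : V, ∑ r' : Fin N,
                q (l, s) (j, r) * (q (k, s) (i, r') * q (l', s) (j, r)) :=
              Finset.sum_congr rfl fun j _ => Finset.sum_congr rfl fun r _ =>
                Finset.sum_congr rfl fun i _ => expand i j r
          _ = ∑ j : V, ∑ r : Fin N, ∑ y : V × Fin N,
                q (l, s) (j, r) * (q (k, s) y * q (l', s) (j, r)) :=
              Finset.sum_congr rfl fun j _ => Finset.sum_congr rfl fun r _ =>
                (split2 (fun y => q (l, s) (j, r) * (q (k, s) y * q (l', s) (j, r)))).symm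
          _ = ∑ j : V, ∑ r : Fin N,
                q (l, s) (j, r) * ((∑ y : V × Fin N, q (k, s) y) * q (l', s) (j, r)) :=
              Finset.sum_congr rfl fun j _ => Finset.sum_congr rfl fun r _ => by
                rw [← Finset.mul_sum, ← Finset.sum_mul]
          _ = ∑ j : V, ∑ r : Fin N, q (l, s) (j, r) * q (l', s) (j, r) := by
              simp only [hrow (k, s), one_mul]
          _ = ∑ z : V × Fin N, q (l, s) z * q (l', s) z :=
              (split2 (fun z => q (l, s) z * q (l', s) z)).symm
      rw [main]
      by_cases hll : l = l'
      · subst hll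
        simp only [eq_self_iff_true, true_and, and_true, if_true]
        calc ∑ z : V × Fin N, q (l, s) z * q (l, s) z
            = ∑ z : V × Fin N, q (l, s) z := Finset.sum_congr rfl fun z _ => hqi _ _
          _ = 1 := hrow (l, s)
      · rw [if_neg (fun hc => hll hc.2.1)]
        exact Finset.sum_eq_zero fun z _ =>
          colOrth z (l, s) (l', s) (fun hc => hll (congrArg Prod.fst hc))
    · rw [if_neg (fun hc => hks ⟨hc.1, hc.2.2⟩)]
      refine Finset.sum_eq_zero fun τ _ => ?_
      have hmid : q (k, s) (τ.1, τ.2.2) * q (k', s') (τ.1, τ.2.2) = 0 :=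
        colOrth (τ.1, τ.2.2) (k, s) (k', s')
          (fun hc => hks ⟨congrArg Prod.fst hc, congrArg Prod.snd hc⟩)
      rw [star_mul, hqs, hqs, mul_assoc, ← mul_assoc (q (k, s) (τ.1, τ.2.2)), hmid,
        zero_mul, mul_zero]
  · -- second identity
    by_cases hls : l = l' ∧ s = s'
    · obtain ⟨hl, hs⟩ := hls
      subst hl; subst hs
      have key2 : ∀ (i j : V) (r r' : Fin N), ¬(r' = r ∧ (i, j, r) ∈ E) →
          q (j, r') (l, s) * q (i, r) (k', s) = 0 := by
        intro i j r r' hcon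
        have base : q (i, r) (k', s) * q (j, r') (l, s) = 0 := by
          rcases hUnif i j with h0 | hN'
          · exact hR2 k' l i j s r r' hk'l's' h0
          · have hne0 : edeg E i j ≠ 0 := by rw [hN']; omega
            exact hR3 k' l i j s r r' hk'l's' hne0
              (fun h => hcon ⟨h.symm, memN i j hne0 r⟩)
        calc q (j, r') (l, s) * q (i, r) (k', s)
            = star (q (i, r) (k', s) * q (j, r') (l, s)) := by rw [star_mul, hqs, hqs]
          _ = 0 := by rw [base, star_zero]
      have hterm : ∀ τ : V × V × Fin N,
          (q (τ.1, τ.2.2) (k, s) * q (τ.2.1, τ.2.2) (l, s)) *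
            star (q (τ.1, τ.2.2) (k', s) * q (τ.2.1, τ.2.2) (l, s)) =
          q (τ.1, τ.2.2) (k, s) * (q (τ.2.1, τ.2.2) (l, s) * q (τ.1, τ.2.2) (k', s)) := by
        intro τ
        rw [star_mul, hqs, hqs, mul_assoc, ← mul_assoc (q (τ.2.1, τ.2.2) (l, s)), hqi]
      rw [Finset.sum_congr rfl (fun τ _ => hterm τ)]
      rw [Finset.sum_subset (Finset.subset_univ E) (fun τ _ hτ => by
        rw [key2 τ.1 τ.2.1 τ.2.2 τ.2.2 (fun hc => hτ hc.2), mul_zero])]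
      have expand : ∀ (i j : V) (r : Fin N),
          q (i, r) (k, s) * (q (j, r) (l, s) * q (i, r) (k', s)) =
          ∑ r' : Fin N, q (i, r) (k, s) * (q (j, r') (l, s) * q (i, r) (k', s)) := by
        intro i j r
        symm
        apply Finset.sum_eq_single_of_mem r (Finset.mem_univ _)
        intro r' _ hne
        rw [key2 i j r r' (fun hc => hne hc.1), mul_zero]
      have main : ∑ τ : V × V × Fin N,
          q (τ.1, τ.2.2) (k, s) * (q (τ.2.1, τ.2.2) (l, s) * q (τ.1, τ.2.2) (k', s)) =
          ∑ y : V × Fin N, q y (k, s) * q y (k', s) :=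
        calc ∑ τ : V × V × Fin N,
            q (τ.1, τ.2.2) (k, s) * (q (τ.2.1, τ.2.2) (l, s) * q (τ.1, τ.2.2) (k', s))
            = ∑ i : V, ∑ j : V, ∑ r : Fin N,
                q (i, r) (k, s) * (q (j, r) (l, s) * q (i, r) (k', s)) :=
              split (fun τ => q (τ.1, τ.2.2) (k, s) *
                (q (τ.2.1, τ.2.2) (l, s) * q (τ.1, τ.2.2) (k', s)))
          _ = ∑ i : V, ∑ r : Fin N, ∑ j : V,
                q (i, r) (k, s) * (q (j, r) (l, s) * q (i, r) (k', s)) :=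
              Finset.sum_congr rfl fun i _ => Finset.sum_comm
          _ = ∑ i : V, ∑ r : Fin N, ∑ j : V, ∑ r' : Fin N,
                q (i, r) (k, s) * (q (j, r') (l, s) * q (i, r) (k', s)) :=
              Finset.sum_congr rfl fun i _ => Finset.sum_congr rfl fun r _ =>
                Finset.sum_congr rfl fun j _ => expand i j r
          _ = ∑ i : V, ∑ r : Fin N, ∑ z : V × Fin N,
                q (i, r) (k, s) * (q z (l, s) * q (i, r) (k', s)) :=
              Finset.sum_congr rfl fun i _ => Finset.sum_congr rfl fun r _ =>
                (split2 (fun z => q (i, r) (k, s) * (q z (l, s) * q (i, r) (k', s)))).symm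
          _ = ∑ i : V, ∑ r : Fin N,
                q (i, r) (k, s) * ((∑ z : V × Fin N, q z (l, s)) * q (i, r) (k', s)) :=
              Finset.sum_congr rfl fun i _ => Finset.sum_congr rfl fun r _ => by
                rw [← Finset.mul_sum, ← Finset.sum_mul]
          _ = ∑ i : V, ∑ r : Fin N, q (i, r) (k, s) * q (i, r) (k', s) := by
              simp only [hcol (l, s), one_mul]
          _ = ∑ y : V × Fin N, q y (k, s) * q y (k', s) :=
              (split2 (fun y => q y (k, s) * q y (k', s))).symm
      rw [main]
      by_cases hkk : k = k'
      · subst hkk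
        simp only [eq_self_iff_true, true_and, and_true, if_true]
        calc ∑ y : V × Fin N, q y (k, s) * q y (k, s)
            = ∑ y : V × Fin N, q y (k, s) := Finset.sum_congr rfl fun y _ => hqi _ _
          _ = 1 := hcol (k, s)
      · rw [if_neg (fun hc => hkk hc.1)]
        exact Finset.sum_eq_zero fun y _ =>
          rowOrth y (k, s) (k', s) (fun hc => hkk (congrArg Prod.fst hc))
    · rw [if_neg (fun hc => hls ⟨hc.2.1, hc.2.2⟩)]
      refine Finset.sum_eq_zero fun τ _ => ?_
      have hmid : q (τ.2.1, τ.2.2) (l, s) * q (τ.2.1, τ.2.2) (l', s') = 0 :=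
        rowOrth (τ.2.1, τ.2.2) (l, s) (l', s')
          (fun hc => hls ⟨congrArg Prod.fst hc, congrArg Prod.snd hc⟩)
      rw [star_mul, hqs, hqs, mul_assoc, ← mul_assoc (q (τ.2.1, τ.2.2) (l, s)), hmid,
        zero_mul, mul_zero]
end

section
/- Let (V,N,E) be a uniform labeled multigraph and A a unital C*-algebra. Let (u^k_i)_{k,i∈V} be a quantum permutation matrix over A indexed by V such that u^k_i u^l_j = 0 whenever |E^k_l| ≠ |E^i_j|. For edges (k,l,s),(i,j,r) ∈ E define w^{(k,l)s}_{(i,j)r} := δ_{s,r} u^k_i u^l_j. Then the E × E matrix (w^{σ}_{τ})_{σ,τ∈E} is bi-unitary: for all edges (k,l,s),(k',l',s') ∈ E, ∑_{(i,j,r)∈E} w^{(k,l)s}_{(i,j)r} (w^{(k',l')s'}_{(i,j)r})* = δ_{k,k'}δ_{l,l'}δ_{s,s'}·1, ∑_{(i,j,r)∈E} (w^{(i,j)r}_{(k,l)s})* w^{(i,j)r}_{(k',l')s'} = δ_{k,k'}δ_{l,l'}δ_{s,s'}·1, ∑_{(i,j,r)∈E} (w^{(k,l)s}_{(i,j)r})*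 w^{(k',l')s'}_{(i,j)r} = δ_{k,k'}δ_{l,l'}δ_{s,s'}·1, and ∑_{(i,j,r)∈E} w^{(i,j)r}_{(k,l)s} (w^{(i,j)r}_{(k',l')s'})* = δ_{k,k'}δ_{l,l'}δ_{s,s'}·1. -/
open scoped BigOperators

lemma proj_orth {A : Type*} [CStarAlgebra A] {ι : Type*} [Fintype ι] [DecidableEq ι]
    (p : ι → A) (hsa : ∀ i, star (p i) = p i) (hid : ∀ i, p i * p i = p i)
    (hsum : ∑ i, p i = 1) : ∀ i j, i ≠ j → p i * p j = 0 := by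
  letI := CStarAlgebra.spectralOrder A
  haveI := CStarAlgebra.spectralOrderedRing A
  intro i j hij
  have hji : p j * p i = 0 := by
    have hsum' : ∑ x, p i * p x * p i = p i := by
      rw [← Finset.sum_mul, ← Finset.mul_sum, hsum, mul_one, hid]
    have hsplit : ∑ x ∈ Finset.univ.erase i, p i * p x * p i = 0 := by
      have h := Finset.add_sum_erase Finset.univ (fun x => p i * p x * p i) (Finset.mem_univ i)
      rw [hsum', hid, hid] at h
      exact (add_eq_left).mp h
    have hrepr : ∀ x, p i * p x * p i = star (p x * p i) * (p x * p i) := by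
      intro x
      rw [star_mul, hsa, hsa]
      conv_lhs => rw [← hid x]
      noncomm_ring
    have hnn : ∀ x ∈ Finset.univ.erase i, (0 : A) ≤ p i * p x * p i := fun x _ => by
      rw [hrepr]; exact star_mul_self_nonneg _
    have hzero := (Finset.sum_eq_zero_iff_of_nonneg hnn).mp hsplit
    have hj : p i * p j * p i = 0 :=
      hzero j (Finset.mem_erase.mpr ⟨fun h => hij h.symm, Finset.mem_univ j⟩)
    rw [hrepr] at hj
    exact CStarRing.star_mul_self_eq_zero_iff _ |>.mp hj
  have := congrArg star hji
  rwa [star_mul, hsa, hsa, star_zero] at this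

lemma mid_zero {A : Type*} [Ring A] (a b c d : A) (h : b * c = 0) : a * b * (c * d) = 0 := by
  rw [mul_assoc, ← mul_assoc b, h, zero_mul, mul_zero]

lemma edeg_full {V : Type*} [DecidableEq V] {N : ℕ} (E : Finset (V × V × Fin N)) {i j : V}
    (h : edeg E i j = N) (r : Fin N) : (i, j, r) ∈ E := by
  classical
  set F := E.filter fun e => e.1 = i ∧ e.2.1 = j with hF
  have hsub : F ⊆ ({i} : Finset V) ×ˢ ({j} : Finset V) ×ˢ (Finset.univ : Finset (Fin N)) := by
    rintro ⟨a, b, c⟩ he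
    rw [hF, Finset.mem_filter] at he
    obtain ⟨-, h1, h2⟩ := he
    simp only at h1 h2
    subst h1; subst h2
    simp [Finset.mem_product]
  have hcard : (({i} : Finset V) ×ˢ ({j} : Finset V) ×ˢ (Finset.univ : Finset (Fin N))).card ≤ F.card := by
    simp only [Finset.card_product, Finset.card_singleton, Finset.card_univ, Fintype.card_fin]
    rw [show F.card = N from h]
    omega
  have heq := Finset.eq_of_subset_of_card_le hsub hcard
  have hmem : (i, j, r) ∈ F := by
    rw [heq]
    simp [Finset.mem_product]
  exact (Finset.mem_filter.mp hmem).1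

lemma sum_reduce {A : Type*} [AddCommMonoid A] {V : Type*} [Fintype V] [DecidableEq V] {N : ℕ}
    (E : Finset (V × V × Fin N)) (s : Fin N) (f : V → V → A)
    (hf : ∀ i j, (i, j, s) ∉ E → f i j = 0) :
    ∑ τ ∈ E, (if s = τ.2.2 then f τ.1 τ.2.1 else 0) = ∑ i, ∑ j, f i j := by
  rw [Finset.sum_subset (Finset.subset_univ E) (by
    rintro ⟨i, j, r⟩ - hne
    by_cases h : s = r
    · subst h; simpa using hf i j hne
    · simp [h])]
  rw [Fintype.sum_prod_type]
  refine Finset.sum_congr rfl fun i _ => ?_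
  rw [Fintype.sum_prod_type]
  refine Finset.sum_congr rfl fun j _ => ?_
  simp

lemma M1 {A : Type*} [Ring A] {V : Type*} [Fintype V] (X X' Y : V → A)
    (hY1 : ∑ j, Y j = 1) (hYid : ∀ j, Y j * Y j = Y j) :
    ∑ i, ∑ j, X i * Y j * (Y j * X' i) = ∑ i, X i * X' i := by
  refine Finset.sum_congr rfl fun i _ => ?_
  have h1 : ∀ j ∈ Finset.univ, X i * Y j * (Y j * X' i) = X i * Y j * X' i := by
    intro j _
    conv_rhs => rw [← hYid j]
    noncomm_ring
  rw [Finset.sum_congr rfl h1, ← Finset.sum_mul, ← Finset.mul_sum, hY1, mul_one]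

lemma M2 {A : Type*} [Ring A] {V : Type*} [Fintype V] (X Y Y' : V → A)
    (hX1 : ∑ i, X i = 1) (hXid : ∀ i, X i * X i = X i) :
    ∑ i, ∑ j, Y j * X i * (X i * Y' j) = ∑ j, Y j * Y' j := by
  rw [Finset.sum_comm]
  exact M1 Y Y' X hX1 hXid

/-- For a uniform labeled multigraph and a vertex quantum permutation matrix `(u^k_i)` with
`u^k_i u^l_j = 0` whenever `|E^k_l| ≠ |E^i_j|`, the `E × E` matrix with entries
`w^{(k,l)s}_{(i,j)r} = δ_{s,r} u^k_i u^l_j` is bi-unitary. -/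
theorem stmt11 {A : Type*} [CStarAlgebra A]
    {V : Type*} [Fintype V] [DecidableEq V] {N : ℕ} (hN : 1 ≤ N)
    (E : Finset (V × V × Fin N))
    (hE : ∀ (i j : V) (r r' : Fin N), (i, j, r) ∈ E → r' ≤ r → (i, j, r') ∈ E)
    (hUnif : ∀ i j : V, edeg E i j = 0 ∨ edeg E i j = N)
    (u : V → V → A)
    (hu : IsQuantumPermutation u)
    (huE : ∀ k l i j : V, edeg E k l ≠ edeg E i j → u k i * u l j = 0)
    (w : (V × V × Fin N) → (V × V × Fin N) → A)
    (hwdef : ∀ (k l i j : V) (s r : Fin N),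
      w (k, l, s) (i, j, r) = if s = r then u k i * u l j else 0)
    (k l : V) (s : Fin N) (hkls : (k, l, s) ∈ E)
    (k' l' : V) (s' : Fin N) (hk'l's' : (k', l', s') ∈ E) :
    ((∑ τ ∈ E, w (k, l, s) τ * star (w (k', l', s') τ)) =
      if k = k' ∧ l = l' ∧ s = s' then 1 else 0) ∧
    ((∑ τ ∈ E, star (w τ (k, l, s)) * w τ (k', l', s')) =
      if k = k' ∧ l = l' ∧ s = s' then 1 else 0) ∧
    ((∑ τ ∈ E, star (w (k, l, s) τ) * w (k', l', s') τ) =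
      if k = k' ∧ l = l' ∧ s = s' then 1 else 0) ∧
    ((∑ τ ∈ E, w τ (k, l, s) * star (w τ (k', l', s'))) =
      if k = k' ∧ l = l' ∧ s = s' then 1 else 0) := by
  obtain ⟨hsa, hid, hrow, hcolsum⟩ := hu
  have row : ∀ a i j, i ≠ j → u a i * u a j = 0 := fun a =>
    proj_orth (u a) (fun i => hsa a i) (fun i => hid a i) (hrow a)
  have col : ∀ i a b, a ≠ b → u a i * u b i = 0 := fun i =>
    proj_orth (fun a => u a i) (fun a => hsa a i) (fun a => hid a i) (hcolsum i)
  have hkl : edeg E k l = N := by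
    refine (hUnif k l).resolve_left ?_
    have hmem : (k, l, s) ∈ E.filter fun e => e.1 = k ∧ e.2.1 = l :=
      Finset.mem_filter.mpr ⟨hkls, rfl, rfl⟩
    exact Finset.card_ne_zero_of_mem hmem
  have kill1 : ∀ i j, (i, j, s) ∉ E → u k i * u l j = 0 := by
    intro i j hnot
    refine huE k l i j fun h => hnot ?_
    exact edeg_full E (by rw [← h, hkl]) s
  have kill2 : ∀ i j, (i, j, s) ∉ E → u i k * u j l = 0 := by
    intro i j hnot
    refine huE i j k l fun h => hnot ?_
    exact edeg_full E (by rw [h, hkl]) s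
  have kill1' : ∀ i j, (i, j, s) ∉ E → u l j * u k i = 0 := by
    intro i j h
    have := congrArg star (kill1 i j h)
    rwa [star_mul, hsa, hsa, star_zero] at this
  have kill2' : ∀ i j, (i, j, s) ∉ E → u j l * u i k = 0 := by
    intro i j h
    have := congrArg star (kill2 i j h)
    rwa [star_mul, hsa, hsa, star_zero] at this
  by_cases hss' : s = s'
  · subst hss'
    refine ⟨?_, ?_, ?_, ?_⟩
    · -- S1
      by_cases hl : l = l'
      · subst hl
        have conv1 : ∀ τ ∈ E, w (k, l, s) τ * star (w (k', l, s) τ) =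
            if s = τ.2.2 then u k τ.1 * u l τ.2.1 * (u l τ.2.1 * u k' τ.1) else 0 := by
          rintro ⟨i, j, r⟩ -
          rw [hwdef, hwdef]
          by_cases h : s = r
          · rw [if_pos h, if_pos h, if_pos h, star_mul, hsa, hsa]
          · rw [if_neg h, if_neg h, if_neg h]
            simp
        rw [Finset.sum_congr rfl conv1,
          sum_reduce E s (fun i j => u k i * u l j * (u l j * u k' i))
            (fun i j hn => by show u k i * u l j * (u l j * u k' i) = 0; rw [kill1 i j hn, zero_mul]),
          M1 (fun i => u k i) (fun i => u k' i) (fun j => u l j) (hrow l) (fun j => hid l j)]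
        by_cases hk : k = k'
        · subst hk
          rw [if_pos ⟨rfl, rfl, rfl⟩,
            Finset.sum_congr rfl (fun i _ => hid k i), hrow k]
        · rw [if_neg (by tauto)]
          exact Finset.sum_eq_zero fun i _ => col i k k' hk
      · rw [if_neg (by tauto)]
        refine Finset.sum_eq_zero ?_
        rintro ⟨i, j, r⟩ -
        rw [hwdef, hwdef]
        by_cases h : s = r
        · rw [if_pos h, if_pos h, star_mul, hsa, hsa]
          exact mid_zero _ _ _ _ (col j l l' hl)
        · rw [if_neg h, if_neg h]
          simp
    · -- S2
      by_cases hk : k = k'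
      · subst hk
        have conv2 : ∀ τ ∈ E, star (w τ (k, l, s)) * w τ (k, l', s) =
            if s = τ.2.2 then u τ.2.1 l * u τ.1 k * (u τ.1 k * u τ.2.1 l') else 0 := by
          rintro ⟨i, j, r⟩ -
          rw [hwdef, hwdef]
          by_cases h : s = r
          · rw [if_pos h.symm, if_pos h.symm, if_pos h, star_mul, hsa, hsa]
          · have h' : ¬ r = s := fun hh => h hh.symm
            rw [if_neg h', if_neg h', if_neg h]
            simp
        rw [Finset.sum_congr rfl conv2,
          sum_reduce E s (fun i j => u j l * u i k * (u i k * u j l'))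
            (fun i j hn => by show u j l * u i k * (u i k * u j l') = 0; rw [kill2' i j hn, zero_mul]),
          M2 (fun i => u i k) (fun j => u j l) (fun j => u j l') (hcolsum k) (fun i => hid i k)]
        by_cases hll : l = l'
        · subst hll
          rw [if_pos ⟨rfl, rfl, rfl⟩,
            Finset.sum_congr rfl (fun j _ => hid j l), hcolsum l]
        · rw [if_neg (by tauto)]
          exact Finset.sum_eq_zero fun j _ => row j l l' hll
      · rw [if_neg (by tauto)]
        refine Finset.sum_eq_zero ?_
        rintro ⟨i, j, r⟩ -
        rw [hwdef, hwdef]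
        by_cases h : r = s
        · rw [if_pos h, if_pos h, star_mul, hsa, hsa]
          exact mid_zero _ _ _ _ (row i k k' hk)
        · rw [if_neg h, if_neg h]
          simp
    · -- S3
      by_cases hk : k = k'
      · subst hk
        have conv3 : ∀ τ ∈ E, star (w (k, l, s) τ) * w (k, l', s) τ =
            if s = τ.2.2 then u l τ.2.1 * u k τ.1 * (u k τ.1 * u l' τ.2.1) else 0 := by
          rintro ⟨i, j, r⟩ -
          rw [hwdef, hwdef]
          by_cases h : s = r
          · rw [if_pos h, if_pos h, if_pos h, star_mul, hsa, hsa]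
          · rw [if_neg h, if_neg h, if_neg h]
            simp
        rw [Finset.sum_congr rfl conv3,
          sum_reduce E s (fun i j => u l j * u k i * (u k i * u l' j))
            (fun i j hn => by show u l j * u k i * (u k i * u l' j) = 0; rw [kill1' i j hn, zero_mul]),
          M2 (fun i => u k i) (fun j => u l j) (fun j => u l' j) (hrow k) (fun i => hid k i)]
        by_cases hll : l = l'
        · subst hll
          rw [if_pos ⟨rfl, rfl, rfl⟩,
            Finset.sum_congr rfl (fun j _ => hid l j), hrow l]
        · rw [if_neg (by tauto)]
          exact Finset.sum_eq_zero fun j _ => col j l l' hll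
      · rw [if_neg (by tauto)]
        refine Finset.sum_eq_zero ?_
        rintro ⟨i, j, r⟩ -
        rw [hwdef, hwdef]
        by_cases h : s = r
        · rw [if_pos h, if_pos h, star_mul, hsa, hsa]
          exact mid_zero _ _ _ _ (col i k k' hk)
        · rw [if_neg h, if_neg h]
          simp
    · -- S4
      by_cases hll : l = l'
      · subst hll
        have conv4 : ∀ τ ∈ E, w τ (k, l, s) * star (w τ (k', l, s)) =
            if s = τ.2.2 then u τ.1 k * u τ.2.1 l * (u τ.2.1 l * u τ.1 k') else 0 := by
          rintro ⟨i, j, r⟩ -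
          rw [hwdef, hwdef]
          by_cases h : s = r
          · rw [if_pos h.symm, if_pos h.symm, if_pos h, star_mul, hsa, hsa]
          · have h' : ¬ r = s := fun hh => h hh.symm
            rw [if_neg h', if_neg h', if_neg h]
            simp
        rw [Finset.sum_congr rfl conv4,
          sum_reduce E s (fun i j => u i k * u j l * (u j l * u i k'))
            (fun i j hn => by show u i k * u j l * (u j l * u i k') = 0; rw [kill2 i j hn, zero_mul]),
          M1 (fun i => u i k) (fun i => u i k') (fun j => u j l) (hcolsum l) (fun j => hid j l)]
        by_cases hk : k = k'
        · subst hk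
          rw [if_pos ⟨rfl, rfl, rfl⟩,
            Finset.sum_congr rfl (fun i _ => hid i k), hcolsum k]
        · rw [if_neg (by tauto)]
          exact Finset.sum_eq_zero fun i _ => row i k k' hk
      · rw [if_neg (by tauto)]
        refine Finset.sum_eq_zero ?_
        rintro ⟨i, j, r⟩ -
        rw [hwdef, hwdef]
        by_cases h : r = s
        · rw [if_pos h, if_pos h, star_mul, hsa, hsa]
          exact mid_zero _ _ _ _ (row j l l' hll)
        · rw [if_neg h, if_neg h]
          simp
  · refine ⟨?_, ?_, ?_, ?_⟩ <;>
    · rw [if_neg (by tauto)]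
      refine Finset.sum_eq_zero ?_
      rintro ⟨i, j, r⟩ -
      rw [hwdef, hwdef]
      split_ifs with h1 h2 <;>
        first
          | exact absurd (h1.trans h2.symm) hss'
          | exact absurd (h1.symm.trans h2) hss'
          | exact absurd (h2.trans h1.symm) hss'
          | exact absurd (h2.symm.trans h1) hss'
          | simp
end
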